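/- Every bounded complex-valued cosine function (c(t))_{t∈ℝ} takes values in [−1, 1], and if additionally c is continuous then there exists a ∈ ℝ with c(t) = cos(at) for all t ∈ ℝ. -/

import Mathlib

open Filter Real

/-- Every complex number `w` is `z + z⁻¹` for some `z` with `‖z‖ ≥ 1`. -/
lemma aux_exists_zpair (w : ℂ) : ∃ z : ℂ, z ≠ 0 ∧ 1 ≤ ‖z‖ ∧ z + z⁻¹ = w := by
  obtain ⟨s, hs⟩ : ∃ s : ℂ, s ^ 2 = w ^ 2 - 4 :=
    IsAlgClosed.exists_pow_nat_eq (w ^ 2 - 4) (by norm_num)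
  set z : ℂ := (w + s) / 2 with hzdef
  have hroot : z ^ 2 - w * z + 1 = 0 := by
    rw [hzdef]; linear_combination hs / 4
  have hz0 : z ≠ 0 := by
    intro h; rw [h] at hroot; simp at hroot
  have hsum : z + z⁻¹ = w := by
    field_simp
    linear_combination hroot
  rcases le_or_gt 1 ‖z‖ with h1 | h1
  · exact ⟨z, hz0, h1, hsum⟩
  · refine ⟨z⁻¹, inv_ne_zero hz0, ?_, by rw [inv_inv, add_comm]; exact hsum⟩
    rw [norm_inv]
    have hpos : 0 < ‖z‖ := norm_pos_iff.mpr hz0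
    rw [le_inv_comm₀ one_pos hpos]
    simpa using h1.le

/-- Part 1: a bounded cosine function is real-valued with values in `[-1,1]`. -/
lemma aux_part1 (c : ℝ → ℂ) (hc0 : c 0 = 1)
    (hc : ∀ s t : ℝ, c (s + t) + c (s - t) = 2 * c s * c t)
    (hb : ∃ M : ℝ, ∀ t : ℝ, ‖c t‖ ≤ M) :
    ∀ t : ℝ, ∃ x : ℝ, c t = (x : ℂ) ∧ |x| ≤ 1 := by
  obtain ⟨M, hM⟩ := hb
  intro t
  obtain ⟨z, hz0, hz1, hzw⟩ := aux_exists_zpair (2 * c t)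
  have key : ∀ n : ℕ, 2 * c (2 ^ n * t) = z ^ (2 ^ n) + (z ^ (2 ^ n))⁻¹ := by
    intro n
    induction n with
    | zero => simpa using hzw.symm
    | succ n ih =>
      have hdup : c (2 ^ (n + 1) * t) = 2 * c (2 ^ n * t) ^ 2 - 1 := by
        have h := hc (2 ^ n * t) (2 ^ n * t)
        have e1 : (2 ^ n * t) + (2 ^ n * t) = 2 ^ (n + 1) * t := by ring
        have e2 : (2 ^ n * t) - (2 ^ n * t) = 0 := by ring
        rw [e1, e2, hc0] at h
        linear_combination h
      have hzn : (z : ℂ) ^ (2 ^ n) ≠ 0 := pow_ne_zero _ hz0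
      have h2 : 2 * c (2 ^ (n + 1) * t) = (2 * c (2 ^ n * t)) ^ 2 - 2 := by
        rw [hdup]; ring
      rw [h2, ih, pow_succ 2 n, pow_mul]
      field_simp
      ring
  have hnorm1 : ‖z‖ = 1 := by
    by_contra hne
    have hgt : 1 < ‖z‖ := lt_of_le_of_ne hz1 (Ne.symm hne)
    obtain ⟨n, hn⟩ := pow_unbounded_of_one_lt (2 * M + 1) hgt
    have hinv : ‖(z ^ (2 ^ n))⁻¹‖ ≤ 1 := by
      rw [norm_inv, norm_pow]
      rw [inv_le_one₀ (by positivity)]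
      exact one_le_pow₀ hz1
    have hbound : ‖z ^ (2 ^ n) + (z ^ (2 ^ n))⁻¹‖ ≤ 2 * M := by
      rw [← key n, norm_mul]
      have := hM (2 ^ n * t)
      simp only [Complex.norm_ofNat] at *
      nlinarith [norm_nonneg (c (2 ^ n * t))]
    have h1 : ‖z‖ ^ (2 ^ n) ≤ 2 * M + 1 := by
      have : ‖z ^ (2 ^ n)‖ ≤ ‖z ^ (2 ^ n) + (z ^ (2 ^ n))⁻¹‖ + ‖(z ^ (2 ^ n))⁻¹‖ := by
        calc ‖z ^ (2 ^ n)‖ = ‖(z ^ (2 ^ n) + (z ^ (2 ^ n))⁻¹) - (z ^ (2 ^ n))⁻¹‖ := by ring_nf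
          _ ≤ _ := norm_sub_le _ _
      rw [norm_pow] at this
      linarith
    have h2 : ‖z‖ ^ n ≤ ‖z‖ ^ (2 ^ n) := pow_le_pow_right₀ hgt.le (@Nat.lt_two_pow_self n).le
    linarith
  have hconj : z⁻¹ = (starRingEnd ℂ) z := Complex.inv_eq_conj hnorm1
  rw [hconj, Complex.add_conj] at hzw
  refine ⟨z.re, ?_, ?_⟩
  · have h2 : (2 : ℂ) * c t = (2 : ℂ) * (z.re : ℂ) := by
      rw [← hzw]; push_cast; ring
    exact mul_left_cancel₀ two_ne_zero h2
  · calc |z.re| ≤ ‖z‖ := Complex.abs_re_le_norm z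
      _ = 1 := by rw [hnorm1]

/-- Positivity from absence of zeros, via the intermediate value theorem. -/
lemma aux_pos (f : ℝ → ℝ) (hf : Continuous f) (h0 : f 0 = 1) (t : ℝ) (ht : 0 ≤ t)
    (hnz : ∀ s, 0 < s → s ≤ t → f s ≠ 0) : 0 < f t := by
  rcases eq_or_lt_of_le ht with h | htpos
  · rw [← h, h0]; norm_num
  by_contra hle
  push_neg at hle
  have hlt : f t < 0 := lt_of_le_of_ne hle (hnz t htpos le_rfl)
  have hmem : (0 : ℝ) ∈ Set.Icc (f t) (f 0) := ⟨hlt.le, by rw [h0]; norm_num⟩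
  obtain ⟨s, hs, hfs⟩ := intermediate_value_Icc' ht hf.continuousOn hmem
  have hs0 : s ≠ 0 := by rintro rfl; rw [h0] at hfs; norm_num at hfs
  exact hnz s (lt_of_le_of_ne hs.1 (Ne.symm hs0)) hs.2 hfs

/-- Two-step induction. -/
lemma aux_two_step {P : ℕ → Prop} (h0 : P 0) (h1 : P 1)
    (hstep : ∀ k, P k → P (k + 1) → P (k + 2)) : ∀ k, P k := by
  have : ∀ k, P k ∧ P (k + 1) := by
    intro k
    induction k with
    | zero => exact ⟨h0, h1⟩
    | succ n ih => exact ⟨ih.2, hstep n ih.1 ih.2⟩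
  exact fun k => (this k).1

lemma aux_tendsto_cos_pow : Tendsto (fun n : ℕ => Real.cos (Real.pi / 2 ^ n)) atTop (nhds 1) := by
  have h1 : Tendsto (fun n : ℕ => Real.pi / 2 ^ n) atTop (nhds 0) := by
    have h2 : Tendsto (fun n : ℕ => Real.pi * (1 / 2 : ℝ) ^ n) atTop (nhds (Real.pi * 0)) :=
      (tendsto_pow_atTop_nhds_zero_of_lt_one (by norm_num) (by norm_num)).const_mul Real.pi
    simpa [div_eq_mul_inv, ← inv_pow, mul_zero] using h2
  have h3 := (Real.continuous_cos.tendsto 0).comp h1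
  simpa [Function.comp_def] using h3

/-- Part 2 for real-valued functions. -/
lemma aux_part2 (f : ℝ → ℝ) (hf : Continuous f) (h0 : f 0 = 1)
    (hfe : ∀ s t : ℝ, f (s + t) + f (s - t) = 2 * f s * f t)
    (hbd : ∀ t : ℝ, |f t| ≤ 1) :
    ∃ a : ℝ, ∀ t : ℝ, f t = Real.cos (a * t) := by
  have heven : ∀ t, f (-t) = f t := by
    intro t
    have h := hfe 0 t
    rw [zero_add, zero_sub, h0] at h
    linarith
  have hdup : ∀ t, f (2 * t) = 2 * f t ^ 2 - 1 := by
    intro t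
    have h := hfe t t
    have e1 : t + t = 2 * t := by ring
    have e2 : t - t = 0 := by ring
    rw [e1, e2, h0] at h
    linarith
  by_cases hzero : ∃ t, 0 < t ∧ f t = 0
  · -- f vanishes somewhere on (0, ∞)
    obtain ⟨t1, ht1, hft1⟩ := hzero
    obtain ⟨δ, hδpos, hδ⟩ : ∃ δ > 0, ∀ s, |s| < δ → 1/2 < f s := by
      have : ∀ᶠ s in nhds (0:ℝ), 1/2 < f s := by
        have := hf.continuousAt (x := 0)
        exact this.eventually_const_lt (by rw [h0]; norm_num)
      rw [Metric.eventually_nhds_iff] at this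
      obtain ⟨ε, hε, h⟩ := this
      exact ⟨ε, hε, fun s hs => h (by simpa [Real.dist_eq] using hs)⟩
    set S : Set ℝ := {s : ℝ | δ ≤ s ∧ f s = 0} with hSdef
    have hSne : S.Nonempty := by
      refine ⟨t1, ?_, hft1⟩
      by_contra hlt
      push_neg at hlt
      have := hδ t1 (by rw [abs_of_pos ht1]; exact hlt)
      rw [hft1] at this; norm_num at this
    have hSclosed : IsClosed S := by
      have : S = {s : ℝ | δ ≤ s} ∩ f ⁻¹' {0} := by ext s; simp [hSdef, Set.mem_setOf_eq]
      rw [this]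
      exact isClosed_le continuous_const continuous_id |>.inter (isClosed_singleton.preimage hf)
    have hSbdd : BddBelow S := ⟨δ, fun s hs => hs.1⟩
    set p := sInf S with hpdef
    have hpS : p ∈ S := hSclosed.csInf_mem hSne hSbdd
    have hppos : 0 < p := lt_of_lt_of_le hδpos hpS.1
    have hfp : f p = 0 := hpS.2
    -- f is positive on [0, p)
    have hfpos : ∀ s, 0 ≤ s → s < p → 0 < f s := by
      intro s hs0 hsp
      refine aux_pos f hf h0 s hs0 ?_
      intro u hu0 hus hfu
      rcases lt_or_ge u δ with h | h
      · have := hδ u (by rw [abs_of_pos hu0]; exact h)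
        rw [hfu] at this; norm_num at this
      · have : p ≤ u := csInf_le hSbdd ⟨h, hfu⟩
        linarith
    refine ⟨Real.pi / (2 * p), ?_⟩
    -- Step A : f (p / 2^n) = cos (π/2 / 2^n)
    have stepA : ∀ n : ℕ, f (p / 2 ^ n) = Real.cos (Real.pi / 2 / 2 ^ n) := by
      intro n
      induction n with
      | zero => simpa using hfp.trans Real.cos_pi_div_two.symm
      | succ n ih =>
        have h1 : f (p / 2 ^ n) = 2 * f (p / 2 ^ (n + 1)) ^ 2 - 1 := by
          have := hdup (p / 2 ^ (n + 1))
          have e : 2 * (p / 2 ^ (n + 1)) = p / 2 ^ n := by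
            field_simp; ring
          rwa [e] at this
        have hsq : f (p / 2 ^ (n + 1)) ^ 2 = Real.cos (Real.pi / 2 / 2 ^ (n + 1)) ^ 2 := by
          have hc2 : Real.cos (Real.pi / 2 / 2 ^ (n + 1)) ^ 2
              = 1 / 2 + Real.cos (Real.pi / 2 / 2 ^ n) / 2 := by
            rw [Real.cos_sq]
            congr 2
            field_simp; ring
          rw [ih] at h1
          rw [hc2]; linarith
        have hfpos' : 0 < f (p / 2 ^ (n + 1)) := by
          refine hfpos _ (by positivity) ?_
          exact div_lt_self hppos (one_lt_pow₀ (by norm_num) (by omega))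
        have hcpos : 0 ≤ Real.cos (Real.pi / 2 / 2 ^ (n + 1)) := by
          apply Real.cos_nonneg_of_mem_Icc
          have hge : (0:ℝ) ≤ Real.pi / 2 / 2 ^ (n + 1) := by positivity
          have hle : Real.pi / 2 / 2 ^ (n + 1) ≤ Real.pi / 2 :=
            div_le_self (by positivity) (one_le_pow₀ (by norm_num))
          exact ⟨by linarith [Real.pi_pos], hle⟩
        nlinarith [hsq]
    -- Step B : f (k * (p / 2^n)) = cos (k * (π/2 / 2^n))
    have stepB : ∀ n k : ℕ, f (k * (p / 2 ^ n)) = Real.cos (k * (Real.pi / 2 / 2 ^ n)) := by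
      intro n
      apply aux_two_step
      · simpa using h0.trans Real.cos_zero.symm
      · simpa using stepA n
      · intro k hk hk1
        have h := hfe ((k + 1 : ℕ) * (p / 2 ^ n)) (p / 2 ^ n)
        have e1 : ((k + 1 : ℕ) : ℝ) * (p / 2 ^ n) + p / 2 ^ n = ((k + 2 : ℕ) : ℝ) * (p / 2 ^ n) := by
          push_cast; ring
        have e2 : ((k + 1 : ℕ) : ℝ) * (p / 2 ^ n) - p / 2 ^ n = (k : ℝ) * (p / 2 ^ n) := by
          push_cast; ring
        rw [e1, e2] at h
        have hcos : Real.cos (((k + 2 : ℕ) : ℝ) * (Real.pi / 2 / 2 ^ n))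
            = 2 * Real.cos (((k + 1 : ℕ) : ℝ) * (Real.pi / 2 / 2 ^ n))
              * Real.cos (Real.pi / 2 / 2 ^ n)
              - Real.cos ((k : ℝ) * (Real.pi / 2 / 2 ^ n)) := by
          have e3 : ((k + 2 : ℕ) : ℝ) * (Real.pi / 2 / 2 ^ n)
              = ((k + 1 : ℕ) : ℝ) * (Real.pi / 2 / 2 ^ n) + Real.pi / 2 / 2 ^ n := by
            push_cast; ring
          have e4 : (k : ℝ) * (Real.pi / 2 / 2 ^ n)
              = ((k + 1 : ℕ) : ℝ) * (Real.pi / 2 / 2 ^ n) - Real.pi / 2 / 2 ^ n := by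
            push_cast; ring
          rw [e3, e4, Real.cos_add, Real.cos_sub]
          ring
        rw [hk, hk1, stepA n] at h
        rw [hcos]
        linarith
    -- Step C : density
    have hkey : ∀ t : ℝ, 0 ≤ t → f t = Real.cos (Real.pi / (2 * p) * t) := by
      intro t ht
      set q : ℕ → ℝ := fun n => (⌊t * 2 ^ n / p⌋₊ : ℝ) * (p / 2 ^ n) with hq
      have hql : ∀ n, t - p / 2 ^ n ≤ q n := by
        intro n
        have hx : t * 2 ^ n / p < ⌊t * 2 ^ n / p⌋₊ + 1 := Nat.lt_floor_add_one _
        have h2n : (0:ℝ) < 2 ^ n := by positivity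
        rw [div_lt_iff₀ hppos] at hx
        show t - p / 2 ^ n ≤ (⌊t * 2 ^ n / p⌋₊ : ℝ) * (p / 2 ^ n)
        rw [← sub_nonneg]
        have he : (⌊t * 2 ^ n / p⌋₊ : ℝ) * (p / 2 ^ n) - (t - p / 2 ^ n)
            = (((⌊t * 2 ^ n / p⌋₊ : ℝ) + 1) * p - t * 2 ^ n) / 2 ^ n := by
          field_simp; ring
        rw [he]
        apply div_nonneg _ h2n.le
        linarith
      have hqu : ∀ n, q n ≤ t := by
        intro n
        have hx : (⌊t * 2 ^ n / p⌋₊ : ℝ) ≤ t * 2 ^ n / p := Nat.floor_le (by positivity)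
        have h2n : (0:ℝ) < 2 ^ n := by positivity
        show (⌊t * 2 ^ n / p⌋₊ : ℝ) * (p / 2 ^ n) ≤ t
        calc (⌊t * 2 ^ n / p⌋₊ : ℝ) * (p / 2 ^ n) ≤ (t * 2 ^ n / p) * (p / 2 ^ n) :=
              mul_le_mul_of_nonneg_right hx (by positivity)
          _ = t := by field_simp
      have hqt : Tendsto q atTop (nhds t) := by
        have hlow : Tendsto (fun n : ℕ => t - p / 2 ^ n) atTop (nhds (t - 0)) := by
          apply Tendsto.const_sub
          have h2 : Tendsto (fun n : ℕ => p * (1 / 2 : ℝ) ^ n) atTop (nhds (p * 0)) :=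
            (tendsto_pow_atTop_nhds_zero_of_lt_one (by norm_num) (by norm_num)).const_mul p
          simpa [div_eq_mul_inv, ← inv_pow, mul_zero] using h2
        rw [sub_zero] at hlow
        exact tendsto_of_tendsto_of_tendsto_of_le_of_le hlow tendsto_const_nhds hql hqu
      have hfq : ∀ n, f (q n) = Real.cos (Real.pi / (2 * p) * q n) := by
        intro n
        rw [hq]
        have := stepB n ⌊t * 2 ^ n / p⌋₊
        rw [this]
        congr 1
        field_simp
      have l1 : Tendsto (fun n => f (q n)) atTop (nhds (f t)) := (hf.tendsto t).comp hqt
      have l2 : Tendsto (fun n => f (q n)) atTop (nhds (Real.cos (Real.pi / (2 * p) * t))) := by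
        have : Tendsto (fun n => Real.cos (Real.pi / (2 * p) * q n)) atTop
            (nhds (Real.cos (Real.pi / (2 * p) * t))) := by
          exact (Real.continuous_cos.tendsto _).comp (hqt.const_mul _)
        simpa [hfq] using this
      exact tendsto_nhds_unique l1 l2
    intro t
    rcases le_or_gt 0 t with ht | ht
    · exact hkey t ht
    · have := hkey (-t) (by linarith)
      rw [heven] at this
      rw [this, mul_neg, Real.cos_neg]
  · -- f never vanishes on (0, ∞) : then f ≡ 1
    push_neg at hzero
    have hpos : ∀ t, 0 < f t := by
      have h1 : ∀ t, 0 ≤ t → 0 < f t := fun t ht =>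
        aux_pos f hf h0 t ht (fun s hs0 _ => hzero s hs0)
      intro t
      rcases le_or_gt 0 t with ht | ht
      · exact h1 t ht
      · rw [← heven]; exact h1 (-t) (by linarith)
    have hlow : ∀ n : ℕ, ∀ t, Real.cos (Real.pi / 2 ^ n) ≤ f t := by
      intro n
      induction n with
      | zero =>
        intro t
        simp only [pow_zero, div_one, Real.cos_pi]
        have := abs_le.mp (hbd t)
        linarith [this.1]
      | succ n ih =>
        intro t
        have h2 : f t ^ 2 = 1 / 2 + f (2 * t) / 2 := by
          have := hdup t; linarith
        have hcsq : Real.cos (Real.pi / 2 ^ (n + 1)) ^ 2 = 1 / 2 + Real.cos (Real.pi / 2 ^ n) / 2 := by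
          rw [Real.cos_sq]
          congr 2
          field_simp; ring
        have h3 : Real.cos (Real.pi / 2 ^ (n + 1)) ^ 2 ≤ f t ^ 2 := by
          rw [h2, hcsq]
          linarith [ih (2 * t)]
        have hcpos : 0 ≤ Real.cos (Real.pi / 2 ^ (n + 1)) := by
          apply Real.cos_nonneg_of_mem_Icc
          have hge : (0:ℝ) ≤ Real.pi / 2 ^ (n + 1) := by positivity
          have h2 : (2:ℝ) ≤ 2 ^ (n + 1) := by
            calc (2:ℝ) = 2 ^ 1 := by norm_num
              _ ≤ 2 ^ (n + 1) := pow_le_pow_right₀ (by norm_num) (by omega)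
          have hle : Real.pi / 2 ^ (n + 1) ≤ Real.pi / 2 :=
            div_le_div_of_nonneg_left Real.pi_pos.le (by norm_num) h2
          exact ⟨by linarith [Real.pi_pos], hle⟩
        nlinarith [hpos t]
    have hone : ∀ t, f t = 1 := by
      intro t
      have hge : 1 ≤ f t := by
        apply le_of_tendsto aux_tendsto_cos_pow
        filter_upwards with n using hlow n t
      have := abs_le.mp (hbd t)
      linarith [this.2]
    exact ⟨0, fun t => by rw [hone, zero_mul, Real.cos_zero]⟩

theorem stmt_5 (c : ℝ → ℂ) (hc0 : c 0 = 1)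
    (hc : ∀ s t : ℝ, c (s + t) + c (s - t) = 2 * c s * c t)
    (hb : ∃ M : ℝ, ∀ t : ℝ, ‖c t‖ ≤ M) :
    (∀ t : ℝ, (c t).im = 0 ∧ (c t).re ∈ Set.Icc (-1 : ℝ) 1) ∧
    (Continuous c → ∃ a : ℝ, ∀ t : ℝ, c t = (Real.cos (a * t) : ℝ)) := by
  have h1 := aux_part1 c hc0 hc hb
  constructor
  · intro t
    obtain ⟨x, hx, hx1⟩ := h1 t
    rw [hx]
    refine ⟨by simp, ?_⟩
    simp only [Complex.ofReal_re]
    exact abs_le.mp hx1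
  · intro hcont
    set f : ℝ → ℝ := fun t => (c t).re with hfdef
    have hcf : ∀ t, c t = (f t : ℂ) := by
      intro t
      obtain ⟨x, hx, _⟩ := h1 t
      rw [hfdef]; simp only; rw [hx]; simp
    have hf : Continuous f := Complex.continuous_re.comp hcont
    have hf0 : f 0 = 1 := by
      have := hc0; rw [hcf 0] at this
      exact_mod_cast this
    have hfe : ∀ s t : ℝ, f (s + t) + f (s - t) = 2 * f s * f t := by
      intro s t
      have h := hc s t
      rw [hcf (s + t), hcf (s - t), hcf s, hcf t] at h
      exact_mod_cast h
    have hbd : ∀ t, |f t| ≤ 1 := by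
      intro t
      obtain ⟨x, hx, hx1⟩ := h1 t
      have : f t = x := by
        rw [hfdef]; simp only; rw [hx]; simp
      rw [this]; exact hx1
    obtain ⟨a, ha⟩ := aux_part2 f hf hf0 hfe hbd
    exact ⟨a, fun t => by rw [hcf t, ha t]⟩
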